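/- With I₁(a) = C - Σ_{i=0}^n q_i (log q_i + θ̂_i μ(θ̂_i) - ψ(θ̂_i)) viewed as a function of the cut-points a = (a_1, ..., a_n), its partial derivatives are ∂I₁/∂a_j = r(a_j) log( (q_j f(a_j|θ̂_j)) / (q_{j-1} f(a_j|θ̂_{j-1})) ) for each j = 1, ..., n. -/

import Mathlib

open MeasureTheory Set

private lemma smml_alg (L T P D q m x q' : ℝ) (hD : D ≠ 0) (hq : q ≠ 0) :
    q' * (L + 1 + T * x - P) = q' * (L + T * (m / q) - P) +
      q * (q' / q + (D⁻¹ * ((x * q' * q - m * q') / q ^ 2) * (m / q) +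
        T * (D * (D⁻¹ * ((x * q' * q - m * q') / q ^ 2)))) -
        m / q * (D⁻¹ * ((x * q' * q - m * q') / q ^ 2))) := by
  field_simp
  ring

private lemma ftc_Iic (f : ℝ → ℝ) (hf : Continuous f) (hint : Integrable f) (x : ℝ) :
    HasDerivAt (fun t => ∫ s in Iic t, f s) (f x) x := by
  have key : (fun t : ℝ => ∫ s in Iic t, f s)
      = fun t : ℝ => (∫ s in Iic (0:ℝ), f s) + ∫ s in (0:ℝ)..t, f s := by
    funext t
    rw [← intervalIntegral.integral_Iic_sub_Iic hint.integrableOn hint.integrableOn]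
    ring
  rw [key]
  exact (intervalIntegral.integral_hasDerivAt_right
    (hf.intervalIntegrable _ _) (hf.stronglyMeasurableAtFilter _ _) hf.continuousAt).const_add _

private lemma muinv_cont (μ dμ : ℝ → ℝ) (hμ : ∀ θ, HasDerivAt μ (dμ θ) θ)
    (hdμpos : ∀ θ, 0 < dμ θ) (μinv : ℝ → ℝ)
    (hinvr : ∀ y, μ (μinv y) = y) : Continuous μinv := by
  have hmono : StrictMono μ := by
    apply strictMono_of_deriv_pos
    intro x; rw [(hμ x).deriv]; exact hdμpos x
  have hsurj : Function.Surjective μ := fun y => ⟨μinv y, hinvr y⟩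
  set e := StrictMono.orderIsoOfSurjective μ hmono hsurj with he
  have hcoe : ⇑e = μ := StrictMono.coe_orderIsoOfSurjective μ hmono hsurj
  have : μinv = ⇑e.symm := by
    funext y
    apply hmono.injective
    rw [hinvr, ← hcoe]
    exact (e.apply_symm_apply y).symm
  rw [this]
  exact e.symm.continuous

private lemma term_deriv (ψ μ dμ : ℝ → ℝ) (hψ : ∀ θ, HasDerivAt ψ (μ θ) θ)
    (hμ : ∀ θ, HasDerivAt μ (dμ θ) θ) (hdμpos : ∀ θ, 0 < dμ θ)
    (μinv : ℝ → ℝ) (hinvr : ∀ y, μ (μinv y) = y) (hμinvcont : Continuous μinv)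
    (Qf Mf : ℝ → ℝ) (x₀ q' : ℝ) (hQd : HasDerivAt Qf q' x₀)
    (hMd : HasDerivAt Mf (x₀ * q') x₀) (hq : 0 < Qf x₀) :
    HasDerivAt
      (fun t => Qf t * (Real.log (Qf t) + μinv (Mf t / Qf t) * μ (μinv (Mf t / Qf t))
        - ψ (μinv (Mf t / Qf t))))
      (q' * (Real.log (Qf x₀) + 1 + μinv (Mf x₀ / Qf x₀) * x₀ - ψ (μinv (Mf x₀ / Qf x₀)))) x₀ := by
  set y₀ := Mf x₀ / Qf x₀ with hy₀
  set θ₀ := μinv y₀ with hθ₀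
  have hμθ : μ θ₀ = y₀ := hinvr y₀
  have hμinv : HasDerivAt μinv (dμ θ₀)⁻¹ y₀ :=
    HasDerivAt.of_local_left_inverse hμinvcont.continuousAt (hμ θ₀) (hdμpos θ₀).ne'
      (Filter.Eventually.of_forall hinvr)
  have hdiv : HasDerivAt (fun t => Mf t / Qf t)
      ((x₀ * q' * Qf x₀ - Mf x₀ * q') / (Qf x₀)^2) x₀ := hMd.div hQd hq.ne'
  have hθ : HasDerivAt (fun t => μinv (Mf t / Qf t))
      ((dμ θ₀)⁻¹ * ((x₀ * q' * Qf x₀ - Mf x₀ * q') / (Qf x₀)^2)) x₀ := by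
    exact HasDerivAt.comp x₀ hμinv hdiv
  set θ' := (dμ θ₀)⁻¹ * ((x₀ * q' * Qf x₀ - Mf x₀ * q') / (Qf x₀)^2) with hθ'
  have hlog : HasDerivAt (fun t => Real.log (Qf t)) (q' / Qf x₀) x₀ := by
    simpa [div_eq_mul_inv, mul_comm] using hQd.log hq.ne'
  have hμc : HasDerivAt (fun t => μ (μinv (Mf t / Qf t))) (dμ θ₀ * θ') x₀ :=
    HasDerivAt.comp x₀ (hμ θ₀) hθ
  have hψc : HasDerivAt (fun t => ψ (μinv (Mf t / Qf t))) (μ θ₀ * θ') x₀ :=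
    HasDerivAt.comp x₀ (hψ θ₀) hθ
  have hmul : HasDerivAt (fun t => μinv (Mf t / Qf t) * μ (μinv (Mf t / Qf t)))
      (θ' * μ θ₀ + θ₀ * (dμ θ₀ * θ')) x₀ := hθ.mul hμc
  have hin : HasDerivAt (fun t => Real.log (Qf t) + μinv (Mf t / Qf t) * μ (μinv (Mf t / Qf t))
      - ψ (μinv (Mf t / Qf t))) (q' / Qf x₀ + (θ' * μ θ₀ + θ₀ * (dμ θ₀ * θ')) - μ θ₀ * θ') x₀ :=
    (hlog.add hmul).sub hψc
  have := hQd.mul hin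
  convert this using 1
  · rfl
  · rfl
  · rfl
  clear_value θ₀ y₀
  rw [← hy₀, ← hθ₀, hθ', hμθ, hy₀]
  exact smml_alg _ θ₀ (ψ θ₀) (dμ θ₀) (Qf x₀) (Mf x₀) x₀ q' (hdμpos θ₀).ne' hq.ne'

theorem smml_I1_partial_deriv
    (n : ℕ) (hn : 1 ≤ n)
    (r : ℝ → ℝ) (hr : Continuous r) (hrpos : ∀ x, 0 < r x)
    (hint : Integrable r) (hnorm : ∫ x, r x = 1)
    (hint1 : Integrable (fun x => x * r x))
    (ψ μ dμ : ℝ → ℝ) (hψ : ∀ θ, HasDerivAt ψ (μ θ) θ)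
    (hμ : ∀ θ, HasDerivAt μ (dμ θ) θ) (hdμcont : Continuous dμ) (hdμpos : ∀ θ, 0 < dμ θ)
    (μinv : ℝ → ℝ) (hinvl : ∀ θ, μinv (μ θ) = θ) (hinvr : ∀ y, μ (μinv y) = y)
    (h : ℝ → ℝ) (hh : ∀ x, 0 < h x) (hhcont : Continuous h)
    (hinth : Integrable (fun x => r x * Real.log (h x)))
    (F : ℝ → ℝ → ℝ) (hF : ∀ x θ, F x θ = Real.exp (x * θ - ψ θ) * h x)
    (C : ℝ) (hC : C = -∫ x, r x * Real.log (h x))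
    (R : ℝ → ℝ) (hR : ∀ x, R x = ∫ t in Iic x, r t)
    (Q : (ℕ → ℝ) → ℕ → ℝ)
    (hQ : ∀ b i, Q b i = (if i = n then 1 else R (b (i + 1))) - (if i = 0 then 0 else R (b i)))
    (M : (ℕ → ℝ) → ℕ → ℝ)
    (hM : ∀ b i, M b i =
      (if i = n then ∫ t, t * r t else ∫ t in Iic (b (i + 1)), t * r t) -
      (if i = 0 then 0 else ∫ t in Iic (b i), t * r t))
    (TH : (ℕ → ℝ) → ℕ → ℝ) (hTH : ∀ b i, TH b i = μinv (M b i / Q b i))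
    (I1 : (ℕ → ℝ) → ℝ)
    (hI1 : ∀ b, I1 b = C - ∑ i ∈ Finset.range (n + 1),
      Q b i * (Real.log (Q b i) + TH b i * μ (TH b i) - ψ (TH b i)))
    (a : ℕ → ℝ) (ha : ∀ i j, 1 ≤ i → i < j → j ≤ n → a i < a j)
    (j : ℕ) (hj1 : 1 ≤ j) (hj2 : j ≤ n) :
    HasDerivAt (fun t => I1 (Function.update a j t))
      (r (a j) * Real.log ((Q a j * F (a j) (TH a j)) /
        (Q a (j - 1) * F (a j) (TH a (j - 1))))) (a j) := by
  have hμinvcont : Continuous μinv := muinv_cont μ dμ hμ hdμpos μinv hinvr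
  set jm := j - 1 with hjm
  have hjm1 : jm + 1 = j := Nat.succ_pred_eq_of_pos hj1
  have hjmn : jm ≠ n := by omega
  have hjmj : jm ≠ j := by omega
  have hjn : j ≠ 0 := by omega
  -- derivative of R
  have hRfun : R = fun t => ∫ s in Iic t, r s := funext hR
  have hRd : ∀ x, HasDerivAt R (r x) x := by
    intro x; rw [hRfun]; exact ftc_Iic r hr hint x
  have hMd : ∀ x, HasDerivAt (fun t => ∫ s in Iic t, s * r s) (x * r x) x :=
    fun x => ftc_Iic (fun s => s * r s) (continuous_id.mul hr) hint1 x
  -- monotonicity / positivity of R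
  have hRlt : ∀ u v : ℝ, u < v → R u < R v := by
    intro u v huv
    have hpos := intervalIntegral.intervalIntegral_pos_of_pos
      (hr.intervalIntegrable u v) hrpos huv
    rw [← intervalIntegral.integral_Iic_sub_Iic hint.integrableOn hint.integrableOn] at hpos
    rw [hR, hR]; linarith
  have hR0 : ∀ u : ℝ, 0 ≤ R u := by
    intro u; rw [hR]
    exact setIntegral_nonneg measurableSet_Iic (fun x _ => (hrpos x).le)
  have hRlt1 : ∀ u : ℝ, R u < 1 := by
    intro u
    have hIoi : 0 < ∫ x in Ioi u, r x := by
      have h1 : 0 < ∫ x in u..(u+1), r x :=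
        intervalIntegral.intervalIntegral_pos_of_pos (hr.intervalIntegrable _ _) hrpos
          (by linarith)
      rw [intervalIntegral.integral_of_le (by linarith)] at h1
      refine lt_of_lt_of_le h1 (setIntegral_mono_set hint.integrableOn
        (Filter.Eventually.of_forall fun x => (hrpos x).le) ?_)
      exact (Ioc_subset_Ioi_self).eventuallyLE
    have := intervalIntegral.integral_Iic_add_Ioi (b := u)
      hint.integrableOn hint.integrableOn
    rw [hnorm] at this
    rw [hR]; linarith
  -- positivity of the two cell probabilities
  have hQjm_pos : 0 < Q a jm := by
    rw [hQ, if_neg hjmn, hjm1]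
    by_cases h0 : jm = 0
    · rw [if_pos h0]
      have h1 := hRlt (a j - 1) (a j) (by linarith)
      have h2 := hR0 (a j - 1)
      linarith
    · rw [if_neg h0]
      have := hRlt (a jm) (a j) (ha jm j (by omega) (by omega) hj2)
      linarith
  have hQj_pos : 0 < Q a j := by
    rw [hQ, if_neg hjn]
    by_cases hn' : j = n
    · rw [if_pos hn']
      have := hRlt1 (a j); linarith
    · rw [if_neg hn']
      have := hRlt (a j) (a (j+1)) (ha j (j+1) hj1 (by omega) (by omega))
      linarith
  -- rewrite the target function
  have hfun : (fun t => I1 (Function.update a j t)) = fun t =>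
      C - ∑ i ∈ Finset.range (n + 1),
        Q (Function.update a j t) i * (Real.log (Q (Function.update a j t) i)
          + TH (Function.update a j t) i * μ (TH (Function.update a j t) i)
          - ψ (TH (Function.update a j t) i)) := funext fun t => hI1 _
  rw [hfun]
  -- per-index derivatives
  set Djm := r (a j) * (Real.log (Q a jm) + 1 + TH a jm * a j - ψ (TH a jm)) with hDjm
  set Dj := -(r (a j) * (Real.log (Q a j) + 1 + TH a j * a j - ψ (TH a j))) with hDj
  set D : ℕ → ℝ := fun i => (if i = jm then Djm else 0) + (if i = j then Dj else 0) with hD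
  have hterms : ∀ i ∈ Finset.range (n + 1),
      HasDerivAt (fun t => Q (Function.update a j t) i * (Real.log (Q (Function.update a j t) i)
          + TH (Function.update a j t) i * μ (TH (Function.update a j t) i)
          - ψ (TH (Function.update a j t) i))) (D i) (a j) := by
    intro i _
    by_cases hijm : i = jm
    · simp only [hijm]
      have hDval : D jm = Djm := by simp [hD, hjmj]
      rw [hDval]
      -- Qf, Mf
      set c₁ := (if jm = 0 then (0:ℝ) else R (a jm)) with hc₁
      set m₁ := (if jm = 0 then (0:ℝ) else ∫ t in Iic (a jm), t * r t) with hm₁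
      set Qf := fun t => R t - c₁ with hQf
      set Mf := fun t => (∫ s in Iic t, s * r s) - m₁ with hMf
      have hupd : ∀ t : ℝ, Function.update a j t jm = a jm :=
        fun t => Function.update_of_ne hjmj t a
      have hQe : ∀ t, Q (Function.update a j t) jm = Qf t := by
        intro t
        rw [hQ, if_neg hjmn, hjm1, Function.update_self, hupd t, hQf]
      have hMe : ∀ t, M (Function.update a j t) jm = Mf t := by
        intro t
        rw [hM, if_neg hjmn, hjm1, Function.update_self, hupd t, hMf]
      have hTHe : ∀ t, TH (Function.update a j t) jm = μinv (Mf t / Qf t) := by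
        intro t; rw [hTH, hQe, hMe]
      have hfe : (fun t => Q (Function.update a j t) jm * (Real.log (Q (Function.update a j t) jm)
          + TH (Function.update a j t) jm * μ (TH (Function.update a j t) jm)
          - ψ (TH (Function.update a j t) jm)))
          = fun t => Qf t * (Real.log (Qf t) + μinv (Mf t / Qf t) * μ (μinv (Mf t / Qf t))
            - ψ (μinv (Mf t / Qf t))) := funext fun t => by rw [hQe, hTHe]
      rw [hfe]
      have hQfa : Qf (a j) = Q a jm := by
        have := hQe (a j); rw [Function.update_eq_self] at this; exact this.symm
      have hMfa : Mf (a j) = M a jm := by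
        have := hMe (a j); rw [Function.update_eq_self] at this; exact this.symm
      have hQd' : HasDerivAt Qf (r (a j)) (a j) := (hRd (a j)).sub_const c₁
      have hMd' : HasDerivAt Mf (a j * r (a j)) (a j) := (hMd (a j)).sub_const m₁
      have hqpos : 0 < Qf (a j) := by rw [hQfa]; exact hQjm_pos
      have := term_deriv ψ μ dμ hψ hμ hdμpos μinv hinvr hμinvcont Qf Mf (a j) (r (a j))
        hQd' hMd' hqpos
      convert this using 1
      rw [hDjm, hQfa, hMfa, ← hTH]
    · by_cases hij : i = j
      · simp only [hij]
        have hDval : D j = Dj := by simp [hD, hjmj.symm]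
        rw [hDval]
        set c₂ := (if j = n then (1:ℝ) else R (a (j+1))) with hc₂
        set m₂ := (if j = n then ∫ t, t * r t else ∫ t in Iic (a (j+1)), t * r t) with hm₂
        set Qf := fun t => c₂ - R t with hQf
        set Mf := fun t => m₂ - (∫ s in Iic t, s * r s) with hMf
        have hupd : ∀ t : ℝ, Function.update a j t (j+1) = a (j+1) :=
          fun t => Function.update_of_ne (by omega) t a
        have hQe : ∀ t, Q (Function.update a j t) j = Qf t := by
          intro t
          rw [hQ, if_neg hjn, Function.update_self, hQf]
          by_cases h0 : j = n <;> simp [h0, hc₂, hupd t]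
        have hMe : ∀ t, M (Function.update a j t) j = Mf t := by
          intro t
          rw [hM, if_neg hjn, Function.update_self, hMf]
          by_cases h0 : j = n <;> simp [h0, hm₂, hupd t]
        have hTHe : ∀ t, TH (Function.update a j t) j = μinv (Mf t / Qf t) := by
          intro t; rw [hTH, hQe, hMe]
        have hfe : (fun t => Q (Function.update a j t) j * (Real.log (Q (Function.update a j t) j)
            + TH (Function.update a j t) j * μ (TH (Function.update a j t) j)
            - ψ (TH (Function.update a j t) j)))
            = fun t => Qf t * (Real.log (Qf t) + μinv (Mf t / Qf t) * μ (μinv (Mf t / Qf t))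
              - ψ (μinv (Mf t / Qf t))) := funext fun t => by rw [hQe, hTHe]
        rw [hfe]
        have hQfa : Qf (a j) = Q a j := by
          have := hQe (a j); rw [Function.update_eq_self] at this; exact this.symm
        have hMfa : Mf (a j) = M a j := by
          have := hMe (a j); rw [Function.update_eq_self] at this; exact this.symm
        have hQd' : HasDerivAt Qf (-(r (a j))) (a j) := (hRd (a j)).const_sub c₂
        have hMd' : HasDerivAt Mf (a j * -(r (a j))) (a j) := by
          simpa [mul_neg] using (hMd (a j)).const_sub m₂
        have hqpos : 0 < Qf (a j) := by rw [hQfa]; exact hQj_pos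
        have := term_deriv ψ μ dμ hψ hμ hdμpos μinv hinvr hμinvcont Qf Mf (a j) (-(r (a j)))
          hQd' hMd' hqpos
        convert this using 1
        rw [hDj, hQfa, hMfa, ← hTH]
        ring
      · -- constant term
        have hDval : D i = 0 := by simp [hD, hijm, hij]
        rw [hDval]
        have hupd1 : ∀ t : ℝ, Function.update a j t i = a i :=
          fun t => Function.update_of_ne hij t a
        have hupd2 : ∀ t : ℝ, Function.update a j t (i+1) = a (i+1) :=
          fun t => Function.update_of_ne (by omega) t a
        have hconst : (fun t => Q (Function.update a j t) i * (Real.log (Q (Function.update a j t) i)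
            + TH (Function.update a j t) i * μ (TH (Function.update a j t) i)
            - ψ (TH (Function.update a j t) i)))
            = fun _ => Q a i * (Real.log (Q a i) + TH a i * μ (TH a i) - ψ (TH a i)) := by
          funext t
          have hQe : Q (Function.update a j t) i = Q a i := by
            rw [hQ, hQ, hupd1 t, hupd2 t]
          have hMe : M (Function.update a j t) i = M a i := by
            rw [hM, hM, hupd1 t, hupd2 t]
          have hTHe : TH (Function.update a j t) i = TH a i := by
            rw [hTH, hTH, hQe, hMe]
          rw [hQe, hTHe]
        rw [hconst]
        exact hasDerivAt_const _ _
  have hsum := (HasDerivAt.sum hterms).const_sub C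
  convert hsum using 1
  · rfl
  · rfl
  · funext x; rw [Finset.sum_apply]
  -- compute the sum
  have hsumD : ∑ i ∈ Finset.range (n + 1), D i = Djm + Dj := by
    rw [hD]
    rw [Finset.sum_add_distrib, Finset.sum_ite_eq' (Finset.range (n+1)) jm (fun _ => Djm),
      Finset.sum_ite_eq' (Finset.range (n+1)) j (fun _ => Dj)]
    rw [if_pos (Finset.mem_range.mpr (by omega)), if_pos (Finset.mem_range.mpr (by omega))]
  rw [hsumD]
  -- log identity
  have key : Real.log ((Q a j * F (a j) (TH a j)) / (Q a jm * F (a j) (TH a jm)))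
      = (Real.log (Q a j) + (a j * TH a j - ψ (TH a j)))
        - (Real.log (Q a jm) + (a j * TH a jm - ψ (TH a jm))) := by
    rw [hF, hF,
      Real.log_div (mul_pos hQj_pos (mul_pos (Real.exp_pos _) (hh _))).ne'
        (mul_pos hQjm_pos (mul_pos (Real.exp_pos _) (hh _))).ne',
      Real.log_mul hQj_pos.ne' (mul_pos (Real.exp_pos _) (hh _)).ne',
      Real.log_mul hQjm_pos.ne' (mul_pos (Real.exp_pos _) (hh _)).ne',
      Real.log_mul (Real.exp_pos _).ne' (hh _).ne',
      Real.log_mul (Real.exp_pos _).ne' (hh _).ne',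
      Real.log_exp, Real.log_exp]
    ring
  rw [key, hDjm, hDj]
  ring
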